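/- Let I be an ideal in a polynomial ring R over a field K with a fixed monomial order, and let G be a Gröbner basis of I. Let B be the set of standard monomials of I (monomials not in the initial ideal of I), enumerated as x^{α_1}, x^{α_2}, …. Let g ∈ R and suppose that for each i, x^{α_i}·g ≡ h_i (mod G) with h_i a K-linear combination of monomials in B. Suppose further that by downward row operations (subtracting a scalar multiple of an earlier row from a later row) the system (x^{α_i})·g ≡ (h_i) (mod G) is transformed into (u_i)·g ≡ (v_i) (mod G), where the nonzero v_i have pairwise distinct leading monomials. Then G ∪ {v_i : v_i ≠ 0} is a Gröbner basis of the ideal (I, g). -/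

import Mathlib

open MvPolynomial
open scoped MonomialOrder

noncomputable section
namespace Paper

variable {σ K : Type*} [Field K]

/-- The leading exponent (multidegree) of a polynomial w.r.t. a monomial order. -/
def mdeg (m : MonomialOrder σ) (f : MvPolynomial σ K) : σ →₀ ℕ :=
  m.toSyn.symm (f.support.sup fun α => m.toSyn α)

/-- The initial ideal of `I` w.r.t. the monomial order `m`. -/
def initialIdeal (m : MonomialOrder σ) (I : Ideal (MvPolynomial σ K)) :
    Ideal (MvPolynomial σ K) :=
  Ideal.span ((fun f => (monomial (mdeg m f) (1 : K))) '' {f | f ∈ I ∧ f ≠ 0})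

/-- `α` is a standard monomial of `I`: the monomial `x^α` is not in the initial ideal. -/
def IsStdMonomial (m : MonomialOrder σ) (I : Ideal (MvPolynomial σ K)) (α : σ →₀ ℕ) : Prop :=
  (monomial α (1 : K)) ∉ initialIdeal m I

/-- `G` is a Gröbner basis of `I` w.r.t. `m`. -/
def IsGroebnerBasis (m : MonomialOrder σ) (I : Ideal (MvPolynomial σ K))
    (G : Set (MvPolynomial σ K)) : Prop :=
  (∀ g ∈ G, g ∈ I ∧ g ≠ 0) ∧
  initialIdeal m I = Ideal.span ((fun f => (monomial (mdeg m f) (1 : K))) '' G)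

/-- An ideal is homogeneous if it is generated by homogeneous polynomials. -/
def IsHomogeneousIdeal (I : Ideal (MvPolynomial σ K)) : Prop :=
  ∃ S : Set (MvPolynomial σ K), (∀ f ∈ S, ∃ k, f.IsHomogeneous k) ∧ I = Ideal.span S

/-- The graded reverse lexicographic order on `Fin N →₀ ℕ`, with
`x_0 > x_1 > ⋯ > x_{N-1}`: compare total degrees first; for equal total degrees,
`α ≺ β` iff the last coordinate in which they differ is larger in `α`. -/
def IsGrevlex {N : ℕ} (m : MonomialOrder (Fin N)) : Prop :=
  ∀ α β : Fin N →₀ ℕ, (α ≺[m] β) ↔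
    (α.degree < β.degree ∨
      (α.degree = β.degree ∧ ∃ j, β j < α j ∧ ∀ k, j < k → α k = β k))

/-- A family of polynomials is generic (over the subfield `F`) if each member is
homogeneous of the prescribed degree and the collection of all of their coefficients
is algebraically independent over `F`. -/
def IsGenericFamily (F : Subfield K) {ι : Type*} (d : ι → ℕ)
    (f : ι → MvPolynomial σ K) : Prop :=
  (∀ i, (f i).IsHomogeneous (d i)) ∧
  AlgebraicIndependent F
    (fun p : (Σ i : ι, {α : σ →₀ ℕ // α.degree = d i}) => coeff p.2.1 (f p.1))

/-- A monomial ideal property: `J` is almost reverse lexicographic if for every minimal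
monomial generator `x^α` of `J`, every monomial of the same degree which is larger
in the order `m` also belongs to `J`. -/
def IsAlmostRevLex (m : MonomialOrder σ) (J : Ideal (MvPolynomial σ K)) : Prop :=
  ∀ α : σ →₀ ℕ, (monomial α (1 : K)) ∈ J →
    (∀ β, β ≤ α → β ≠ α → (monomial β (1 : K)) ∉ J) →
    ∀ γ : σ →₀ ℕ, γ.degree = α.degree → (α ≺[m] γ) → (monomial γ (1 : K)) ∈ J

/-- The map `K[x_1,…,x_n,z] → K[x_1,…,x_n]` sending `z` to `0`. -/
def projZ (n : ℕ) (K : Type*) [Field K] :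
    MvPolynomial (Fin (n+1)) K →ₐ[K] MvPolynomial (Fin n) K :=
  MvPolynomial.aeval (Fin.lastCases (motive := fun _ => MvPolynomial (Fin n) K) 0 X)

/-- Embedding of exponents from `n` variables into `n+1` variables. -/
def emb (n : ℕ) : (Fin n →₀ ℕ) → (Fin (n+1) →₀ ℕ) :=
  Finsupp.mapDomain Fin.castSucc



section Aux
variable (m : MonomialOrder σ)

lemma toSyn_mdeg (f : MvPolynomial σ K) :
    m.toSyn (mdeg m f) = f.support.sup fun α => m.toSyn α := by
  simp [mdeg]

lemma le_toSyn_mdeg {f : MvPolynomial σ K} {β : σ →₀ ℕ} (hβ : β ∈ f.support) :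
    m.toSyn β ≤ m.toSyn (mdeg m f) := by
  rw [toSyn_mdeg]; exact Finset.le_sup hβ

lemma coeff_eq_zero_of_lt {f : MvPolynomial σ K} {δ : σ →₀ ℕ}
    (h : m.toSyn (mdeg m f) < m.toSyn δ) : coeff δ f = 0 := by
  by_contra hc
  exact absurd (le_toSyn_mdeg m (mem_support_iff.mpr hc)) (not_le.mpr h)

lemma mdeg_mem_support {f : MvPolynomial σ K} (hf : f ≠ 0) : mdeg m f ∈ f.support := by
  have hne : f.support.Nonempty := Finset.nonempty_iff_ne_empty.mpr
    (fun h => hf (MvPolynomial.support_eq_empty.mp h))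
  obtain ⟨b, hb, hsup⟩ := Finset.exists_mem_eq_sup f.support hne fun α => m.toSyn α
  have : mdeg m f = b := by
    rw [mdeg, hsup]; exact m.toSyn.symm_apply_apply b
  rw [this]; exact hb

lemma lc_ne_zero {f : MvPolynomial σ K} (hf : f ≠ 0) : coeff (mdeg m f) f ≠ 0 :=
  mem_support_iff.mp (mdeg_mem_support m hf)

lemma mdeg_eq_of {f : MvPolynomial σ K} {β : σ →₀ ℕ} (h1 : coeff β f ≠ 0)
    (h2 : ∀ δ, m.toSyn β < m.toSyn δ → coeff δ f = 0) : mdeg m f = β := by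
  have hf : f ≠ 0 := fun h => h1 (by simp [h])
  have hle : m.toSyn β ≤ m.toSyn (mdeg m f) := le_toSyn_mdeg m (mem_support_iff.mpr h1)
  rcases eq_or_lt_of_le hle with h | h
  · exact m.toSyn.injective h.symm
  · exact absurd (h2 _ h) (lc_ne_zero m hf)

lemma mdeg_add_of_lt {f g : MvPolynomial σ K} (hf : f ≠ 0)
    (h : m.toSyn (mdeg m g) < m.toSyn (mdeg m f)) : mdeg m (f + g) = mdeg m f := by
  apply mdeg_eq_of m
  · rw [coeff_add, coeff_eq_zero_of_lt m h, add_zero]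
    exact lc_ne_zero m hf
  · intro δ hδ
    rw [coeff_add, coeff_eq_zero_of_lt m hδ, coeff_eq_zero_of_lt m (h.trans hδ), add_zero]

lemma small_or_zero {q q' : MvPolynomial σ K}
    (h1 : ∀ δ, m.toSyn (mdeg m q) < m.toSyn δ → coeff δ q' = 0)
    (h2 : coeff (mdeg m q) q' = 0) :
    q' = 0 ∨ m.toSyn (mdeg m q') < m.toSyn (mdeg m q) := by
  by_cases hq' : q' = 0
  · exact Or.inl hq'
  · right
    rcases lt_trichotomy (m.toSyn (mdeg m q')) (m.toSyn (mdeg m q)) with h | h | h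
    · exact h
    · exact absurd (m.toSyn.injective h ▸ h2) (lc_ne_zero m hq')
    · exact absurd (h1 _ h) (lc_ne_zero m hq')

lemma mdeg_monomial_mul {b : MvPolynomial σ K} (hb : b ≠ 0) {c : K} (hc : c ≠ 0) (γ : σ →₀ ℕ) :
    mdeg m (monomial γ c * b) = γ + mdeg m b := by
  apply mdeg_eq_of m
  · rw [coeff_monomial_mul]
    exact mul_ne_zero hc (lc_ne_zero m hb)
  · intro δ hδ
    rw [coeff_monomial_mul']
    split_ifs with hγ
    · have hdd : δ = γ + (δ - γ) := by rw [add_comm, tsub_add_cancel_of_le hγ]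
      have : m.toSyn (mdeg m b) < m.toSyn (δ - γ) := by
        have := hδ
        rw [map_add] at this
        rw [hdd, map_add] at this
        exact lt_of_add_lt_add_left this
      rw [coeff_eq_zero_of_lt m this, mul_zero]
    · rfl

lemma division (G : Set (MvPolynomial σ K)) (hG0 : ∀ b ∈ G, b ≠ 0) (q : MvPolynomial σ K) :
    ∃ p r, q = p + r ∧ p ∈ Ideal.span G ∧
      ∀ β ∈ r.support, ¬ ∃ b ∈ G, mdeg m b ≤ β := by
  have H : ∀ s : m.syn, ∀ q : MvPolynomial σ K, m.toSyn (mdeg m q) = s →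
      ∃ p r, q = p + r ∧ p ∈ Ideal.span G ∧
        ∀ β ∈ r.support, ¬ ∃ b ∈ G, mdeg m b ≤ β := by
    classical
    intro s
    induction s using WellFoundedLT.induction with
    | _ s ih =>
    intro q hq
    by_cases hq0 : q = 0
    · exact ⟨0, 0, by simp [hq0], Ideal.zero_mem _, by simp⟩
    by_cases hdiv : ∃ b ∈ G, mdeg m b ≤ mdeg m q
    · obtain ⟨b, hbG, hble⟩ := hdiv
      have hb0 : b ≠ 0 := hG0 b hbG
      set c : K := coeff (mdeg m q) q / coeff (mdeg m b) b with hc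
      have hc0 : c ≠ 0 := div_ne_zero (lc_ne_zero m hq0) (lc_ne_zero m hb0)
      set t : MvPolynomial σ K := monomial (mdeg m q - mdeg m b) c * b with ht
      have htdeg : mdeg m t = mdeg m q := by
        rw [ht, mdeg_monomial_mul m hb0 hc0, tsub_add_cancel_of_le hble]
      have htlc : coeff (mdeg m q) t = coeff (mdeg m q) q := by
        have h1 := coeff_monomial_mul (mdeg m b) (mdeg m q - mdeg m b) c b
        rw [tsub_add_cancel_of_le hble] at h1
        rw [ht, h1, hc, div_mul_cancel₀ _ (lc_ne_zero m hb0)]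
      have htI : t ∈ Ideal.span G := Ideal.mul_mem_left _ _ (Ideal.subset_span hbG)
      have hsmall := small_or_zero m (q := q) (q' := q - t)
        (fun δ hδ => by
          rw [coeff_sub, coeff_eq_zero_of_lt m hδ,
            coeff_eq_zero_of_lt m (f := t) (htdeg ▸ hδ), sub_zero])
        (by rw [coeff_sub, htlc, sub_self])
      rcases hsmall with h0 | hlt
      · exact ⟨t, 0, by rw [← sub_eq_zero.mp h0]; ring, htI, by simp⟩
      · obtain ⟨p, r, heq, hpI, hr⟩ := ih _ (hq ▸ hlt) (q - t) rfl
        exact ⟨p + t, r, by rw [add_assoc, add_comm t r, ← add_assoc, ← heq]; ring,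
          Ideal.add_mem _ hpI htI, hr⟩
    · set t : MvPolynomial σ K := monomial (mdeg m q) (coeff (mdeg m q) q) with ht
      have htsupp : ∀ β ∈ t.support, ¬ ∃ b ∈ G, mdeg m b ≤ β := by
        intro β hβ
        have : β = mdeg m q := by
          rw [ht] at hβ
          have := MvPolynomial.support_monomial_subset hβ
          simpa using this
        rw [this]; exact hdiv
      have hsmall := small_or_zero m (q := q) (q' := q - t)
        (fun δ hδ => by
          rw [coeff_sub, coeff_eq_zero_of_lt m hδ, ht, coeff_monomial,
            if_neg (fun h => absurd (h ▸ hδ) (lt_irrefl _)), sub_zero])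
        (by rw [coeff_sub, ht, coeff_monomial, if_pos rfl, sub_self])
      rcases hsmall with h0 | hlt
      · exact ⟨0, t, by rw [← sub_eq_zero.mp h0]; ring, Ideal.zero_mem _, htsupp⟩
      · obtain ⟨p, r, heq, hpI, hr⟩ := ih _ (hq ▸ hlt) (q - t) rfl
        refine ⟨p, r + t, by rw [← add_assoc, ← heq]; ring, hpI, ?_⟩
        intro β hβ
        rcases Finset.mem_union.mp (MvPolynomial.support_add hβ) with h | h
        · exact hr β h
        · exact htsupp β h
  exact H _ q rfl

lemma monomial_image_eq (G : Set (MvPolynomial σ K)) :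
    ((fun f => (monomial (mdeg m f) (1 : K))) '' G)
      = (fun s => monomial s (1 : K)) '' (mdeg m '' G) := by
  rw [Set.image_image]

lemma lm_mem_initialIdeal {I : Ideal (MvPolynomial σ K)} {f : MvPolynomial σ K}
    (hf : f ∈ I) (hf0 : f ≠ 0) : (monomial (mdeg m f) (1 : K)) ∈ initialIdeal m I :=
  Ideal.subset_span ⟨f, ⟨hf, hf0⟩, rfl⟩

variable {I : Ideal (MvPolynomial σ K)} {G : Set (MvPolynomial σ K)}

lemma std_iff (hG : IsGroebnerBasis m I G) (β : σ →₀ ℕ) :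
    IsStdMonomial m I β ↔ ¬ ∃ b ∈ G, mdeg m b ≤ β := by
  rw [IsStdMonomial, hG.2, monomial_image_eq, not_iff_not,
    mem_ideal_span_monomial_image]
  constructor
  · intro h
    obtain ⟨si, hsi, hle⟩ := h β (by classical simp [coeff_monomial])
    obtain ⟨b, hb, rfl⟩ := hsi
    exact ⟨b, hb, hle⟩
  · rintro ⟨b, hb, hle⟩ xi hxi
    have : xi = β := by simpa using MvPolynomial.support_monomial_subset hxi
    exact ⟨mdeg m b, ⟨b, hb, rfl⟩, this ▸ hle⟩

lemma normal_form (hG : IsGroebnerBasis m I G) (q : MvPolynomial σ K) :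
    ∃ p r, q = p + r ∧ p ∈ I ∧ ∀ β ∈ r.support, IsStdMonomial m I β := by
  obtain ⟨p, r, heq, hp, hr⟩ := division m G (fun b hb => (hG.1 b hb).2) q
  exact ⟨p, r, heq, (Ideal.span_le.mpr (fun b hb => (hG.1 b hb).1)) hp,
    fun β hβ => (std_iff m hG β).mpr (hr β hβ)⟩

lemma std_in_ideal_zero {r : MvPolynomial σ K} (hrI : r ∈ I)
    (hrs : ∀ β ∈ r.support, IsStdMonomial m I β) : r = 0 := by
  by_contra hr0
  exact hrs _ (mdeg_mem_support m hr0) (lm_mem_initialIdeal m hrI hr0)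

section Main
variable {I : Ideal (MvPolynomial σ K)}
  (h : ℕ → MvPolynomial σ K) (U : ℕ → ℕ → K)
  (v : ℕ → MvPolynomial σ K)

lemma v_eq_sum (hUtri : ∀ i j, i < j → U i j = 0)
    (hv : ∀ i, v i = ∑ᶠ j, U i j • h j) (i : ℕ) :
    v i = ∑ j ∈ Finset.range (i+1), U i j • h j := by
  rw [hv i]
  apply finsum_eq_sum_of_support_subset
  intro j hj
  simp only [Function.mem_support] at hj
  simp only [Finset.coe_range, Set.mem_Iio]
  by_contra hc
  exact hj (by rw [hUtri i j (by omega), zero_smul])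

lemma h_mem_span (hUtri : ∀ i j, i < j → U i j = 0) (hUdiag : ∀ i, U i i ≠ 0)
    (hv : ∀ i, v i = ∑ᶠ j, U i j • h j) (j : ℕ) :
    h j ∈ Submodule.span K (Set.range v) := by
  induction j using Nat.strong_induction_on with
  | _ j ih =>
  have hvj := v_eq_sum h U v hUtri hv j
  rw [Finset.sum_range_succ] at hvj
  have : h j = (U j j)⁻¹ • (v j - ∑ k ∈ Finset.range j, U j k • h k) := by
    rw [hvj]
    field_simp
    rw [add_sub_cancel_left, smul_smul, one_div, inv_mul_cancel₀ (hUdiag j), one_smul]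
  rw [this]
  refine Submodule.smul_mem _ _ (Submodule.sub_mem _
    (Submodule.subset_span ⟨j, rfl⟩) (Submodule.sum_mem _ fun k hk => ?_))
  exact Submodule.smul_mem _ _ (ih k (Finset.mem_range.mp hk))

lemma sum_supp_prop {ι : Type*} (P : (σ →₀ ℕ) → Prop) (s : Finset ι)
    (f : ι → MvPolynomial σ K) (hf : ∀ i ∈ s, ∀ β ∈ (f i).support, P β) :
    ∀ β ∈ (∑ i ∈ s, f i).support, P β := by
  classical
  induction s using Finset.induction_on with
  | empty => simp
  | @insert a s' hx ihs =>
    rw [Finset.sum_insert hx]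
    intro β hβ
    rcases Finset.mem_union.mp (MvPolynomial.support_add hβ) with hh | hh
    · exact hf a (Finset.mem_insert_self a s') β hh
    · exact ihs (fun i hi => hf i (Finset.mem_insert_of_mem hi)) β hh

/-- every element of the K-span of the (v i) is supported on std monomials and, if nonzero,
has the leading monomial of one of the v i -/
lemma span_v_props (hstd : ∀ i, ∀ β ∈ (v i).support, IsStdMonomial m I β)
    (hlead : ∀ i j, i ≠ j → v i ≠ 0 → v j ≠ 0 → mdeg m (v i) ≠ mdeg m (v j))
    {w : MvPolynomial σ K} (hw : w ∈ Submodule.span K (Set.range v)) :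
    (∀ β ∈ w.support, IsStdMonomial m I β) ∧
    (w ≠ 0 → ∃ i, v i ≠ 0 ∧ mdeg m w = mdeg m (v i)) := by
  classical
  obtain ⟨d, hd⟩ := Finsupp.mem_span_range_iff_exists_finsupp.mp hw
  rw [Finsupp.sum] at hd
  constructor
  · rw [← hd]
    apply sum_supp_prop
    intro i _ β hβ
    exact hstd i β (Finsupp.support_smul hβ)
  · intro hw0
    set T : Finset ℕ := d.support.filter (fun i => d i • v i ≠ 0) with hT
    have hdT : ∑ i ∈ T, d i • v i = w := by
      rw [← hd, hT]
      exact Finset.sum_filter_ne_zero _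
    have hTne : T.Nonempty := by
      rcases Finset.eq_empty_or_nonempty T with he | hne
      · exact absurd (by rw [← hdT, he, Finset.sum_empty]) (Ne.symm hw0)
      · exact hne
    obtain ⟨i₀, hi₀T, hmax⟩ := Finset.exists_max_image T (fun i => m.toSyn (mdeg m (v i))) hTne
    have hvi₀ : v i₀ ≠ 0 := by
      intro hz
      have := (Finset.mem_filter.mp hi₀T).2
      rw [hz, smul_zero] at this; exact this rfl
    have hdi₀ : d i₀ ≠ 0 := by
      intro hz
      have := (Finset.mem_filter.mp hi₀T).2
      rw [hz, zero_smul] at this; exact this rfl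
    refine ⟨i₀, hvi₀, ?_⟩
    have key : ∀ i ∈ T, i ≠ i₀ → m.toSyn (mdeg m (v i)) < m.toSyn (mdeg m (v i₀)) := by
      intro i hiT hne
      have hvi : v i ≠ 0 := by
        intro hz
        have := (Finset.mem_filter.mp hiT).2
        rw [hz, smul_zero] at this; exact this rfl
      refine lt_of_le_of_ne (hmax i hiT) ?_
      intro he
      exact hlead i i₀ hne hvi hvi₀ (m.toSyn.injective he)
    apply mdeg_eq_of m
    · rw [← hdT, ← Finset.add_sum_erase _ _ hi₀T]
      have : ∀ i ∈ T.erase i₀, coeff (mdeg m (v i₀)) (d i • v i) = 0 := by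
        intro i hi
        rw [coeff_smul, coeff_eq_zero_of_lt m
          (key i (Finset.mem_of_mem_erase hi) (Finset.ne_of_mem_erase hi)), smul_zero]
      rw [coeff_add, coeff_smul]
      have hsum0 : coeff (mdeg m (v i₀)) (∑ i ∈ T.erase i₀, d i • v i) = 0 := by
        rw [MvPolynomial.coeff_sum]
        exact Finset.sum_eq_zero this
      rw [hsum0, add_zero, smul_eq_mul]
      exact mul_ne_zero hdi₀ (lc_ne_zero m hvi₀)
    · intro δ hδ
      rw [← hdT, MvPolynomial.coeff_sum]
      apply Finset.sum_eq_zero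
      intro i hiT
      rw [coeff_smul]
      rcases eq_or_ne i i₀ with rfl | hne
      · rw [coeff_eq_zero_of_lt m hδ, smul_zero]
      · rw [coeff_eq_zero_of_lt m ((key i hiT hne).trans hδ), smul_zero]

end Main
end Aux

/-- Gao–Guan–Volny: incremental Gröbner bases.  If `G` is a Gröbner basis of `I`,
the standard monomials of `I` are enumerated by `α`, the normal forms of
`x^{α_i}·g` are the `h i`, and downward row operations (encoded by the lower
triangular invertible matrix `U`) transform the system `(x^{α_i})·g ≡ (h_i)` into
`(u_i)·g ≡ (v_i)` where the nonzero `v i` have pairwise distinct leading monomials,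
then `G ∪ {v i ≠ 0}` is a Gröbner basis of `(I, g)`. -/
theorem groebner_basis_of_row_reduction
    {σ K : Type*} [Field K] (m : MonomialOrder σ)
    (I : Ideal (MvPolynomial σ K)) (G : Set (MvPolynomial σ K))
    (hG : IsGroebnerBasis m I G)
    (g : MvPolynomial σ K)
    (α : ℕ → (σ →₀ ℕ))
    (hαinj : Function.Injective α)
    (hαrange : ∀ β, IsStdMonomial m I β ↔ ∃ i, α i = β)
    (h : ℕ → MvPolynomial σ K)
    (hmod : ∀ i, (monomial (α i) (1 : K)) * g - h i ∈ I)
    (hred : ∀ i, ∀ β ∈ (h i).support, IsStdMonomial m I β)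
    (U : ℕ → ℕ → K)
    (hUtri : ∀ i j, i < j → U i j = 0)
    (hUdiag : ∀ i, U i i ≠ 0)
    (u v : ℕ → MvPolynomial σ K)
    (hu : ∀ i, u i = ∑ᶠ j, U i j • (monomial (α j) (1 : K)))
    (hv : ∀ i, v i = ∑ᶠ j, U i j • h j)
    (hlead : ∀ i j, i ≠ j → v i ≠ 0 → v j ≠ 0 → mdeg m (v i) ≠ mdeg m (v j)) :
    IsGroebnerBasis m (I ⊔ Ideal.span {g}) (G ∪ {p | ∃ i, v i ≠ 0 ∧ p = v i}) := by
    classical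
  set J : Ideal (MvPolynomial σ K) := I ⊔ Ideal.span {g} with hJ
  have hIJ : I ≤ J := le_sup_left
  have hgJ : ∀ q : MvPolynomial σ K, q * g ∈ J :=
    fun q => le_sup_right (a := I) (Ideal.mul_mem_left _ q (Ideal.mem_span_singleton_self g))
  -- h j ∈ J
  have h_mem_J : ∀ j, h j ∈ J := by
    intro j
    have : h j = (monomial (α j) (1:K)) * g - ((monomial (α j) (1:K)) * g - h j) := by ring
    rw [this]
    exact Submodule.sub_mem _ (hgJ _) (hIJ (hmod j))
  -- v i ∈ J
  have v_mem_J : ∀ i, v i ∈ J := by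
    intro i
    rw [v_eq_sum h U v hUtri hv i]
    refine Submodule.sum_mem _ fun j _ => ?_
    rw [MvPolynomial.smul_eq_C_mul]
    exact Ideal.mul_mem_left _ _ (h_mem_J j)
  -- v i supported on std monomials
  have v_std : ∀ i, ∀ β ∈ (v i).support, IsStdMonomial m I β := by
    intro i
    rw [v_eq_sum h U v hUtri hv i]
    exact sum_supp_prop _ _ _
      (fun j _ β hβ => hred j β (Finsupp.support_smul hβ))
  set M := Submodule.span K (Set.range v) with hM
  -- decomposition of elements of J
  have decomp : ∀ f ∈ J, ∃ P w, f = P + w ∧ P ∈ I ∧ w ∈ M := by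
    intro f hf
    rw [hJ, Submodule.mem_sup] at hf
    obtain ⟨p, hp, s, hs, rfl⟩ := hf
    obtain ⟨q, rfl⟩ := Ideal.mem_span_singleton'.mp hs
    obtain ⟨p', r, rfl, hp', hr⟩ := normal_form m hG q
    -- index choice for std monomials of r
    have hidx : ∀ β ∈ r.support, ∃ i, α i = β := fun β hβ => (hαrange β).mp (hr β hβ)
    choose idx hidxeq using hidx
    set w : MvPolynomial σ K :=
      ∑ β ∈ r.support.attach, (coeff β.1 r) • h (idx β.1 β.2) with hw
    have hwM : w ∈ M := Submodule.sum_mem _ fun β _ =>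
      Submodule.smul_mem _ _ (h_mem_span h U v hUtri hUdiag hv _)
    have hrg : r * g - w ∈ I := by
      have hrsum : r * g = ∑ β ∈ r.support.attach,
          (coeff β.1 r) • ((monomial (α (idx β.1 β.2)) (1:K)) * g) := by
        conv_lhs => rw [← MvPolynomial.support_sum_monomial_coeff r]
        rw [← Finset.sum_attach r.support (fun β => monomial β (coeff β r)), Finset.sum_mul]
        apply Finset.sum_congr rfl
        intro β _
        rw [hidxeq β.1 β.2, ← smul_mul_assoc, MvPolynomial.smul_monomial,
          smul_eq_mul, mul_one]
      rw [hrsum, hw, ← Finset.sum_sub_distrib]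
      apply Submodule.sum_mem
      intro β _
      rw [← smul_sub, MvPolynomial.smul_eq_C_mul]
      exact Ideal.mul_mem_left _ _ (hmod (idx β.1 β.2))
    exact ⟨p + p' * g + (r * g - w), w,
      by ring, Ideal.add_mem _ (Ideal.add_mem _ hp (Ideal.mul_mem_right _ _ hp')) hrg,
      hwM⟩
  -- the target span
  set A : Ideal (MvPolynomial σ K) :=
    Ideal.span ((fun f => (monomial (mdeg m f) (1 : K))) ''
      (G ∪ {p | ∃ i, v i ≠ 0 ∧ p = v i})) with hA
  have hinIA : initialIdeal m I ≤ A := by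
    rw [hG.2, hA]
    exact Ideal.span_mono (Set.image_mono Set.subset_union_left)
  have hvA : ∀ i, v i ≠ 0 → (monomial (mdeg m (v i)) (1:K)) ∈ A :=
    fun i hi => Ideal.subset_span ⟨v i, Or.inr ⟨i, hi, rfl⟩, rfl⟩
  constructor
  · rintro p (hpG | ⟨i, hvi, rfl⟩)
    · exact ⟨hIJ (hG.1 p hpG).1, (hG.1 p hpG).2⟩
    · exact ⟨v_mem_J i, hvi⟩
  · apply le_antisymm
    · rw [initialIdeal]
      apply Ideal.span_le.mpr
      rintro x ⟨f, ⟨hfJ, hf0⟩, rfl⟩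
      obtain ⟨P, w, rfl, hPI, hwM⟩ := decomp _ hfJ
      show (monomial (mdeg m (P + w)) (1:K)) ∈ A
      obtain ⟨hwstd, hwlead⟩ := span_v_props m v v_std hlead hwM
      by_cases hw0 : w = 0
      · rw [hw0, add_zero] at hf0 ⊢
        exact hinIA (lm_mem_initialIdeal m hPI hf0)
      obtain ⟨i₀, hvi₀, hwdeg⟩ := hwlead hw0
      by_cases hP0 : P = 0
      · rw [hP0, zero_add] at hf0 ⊢
        rw [hwdeg]
        exact hvA i₀ hvi₀
      rcases lt_trichotomy (m.toSyn (mdeg m P)) (m.toSyn (mdeg m w)) with hc | hc | hc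
      · rw [add_comm, mdeg_add_of_lt m hw0 hc, hwdeg]
        exact hvA i₀ hvi₀
      · exfalso
        have heq : mdeg m P = mdeg m w := m.toSyn.injective hc
        have h1 : (monomial (mdeg m P) (1:K)) ∈ initialIdeal m I :=
          lm_mem_initialIdeal m hPI hP0
        have h2 : IsStdMonomial m I (mdeg m w) := hwstd _ (mdeg_mem_support m hw0)
        rw [heq] at h1
        exact h2 h1
      · rw [mdeg_add_of_lt m hP0 hc]
        exact hinIA (lm_mem_initialIdeal m hPI hP0)
    · rw [initialIdeal]
      apply Ideal.span_le.mpr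
      rintro x ⟨p, hp, rfl⟩
      rcases hp with hpG | ⟨i, hvi, rfl⟩
      · exact Ideal.subset_span ⟨p, ⟨hIJ (hG.1 p hpG).1, (hG.1 p hpG).2⟩, rfl⟩
      · exact Ideal.subset_span ⟨v i, ⟨v_mem_J i, hvi⟩, rfl⟩


end Paper
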